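/- Let G be an n-vertex graph whose largest independent set has size α ≥ 1. Then for all x > 0, the independence polynomial satisfies P(G,x) ≤ (1 + nx/α)^α. -/

import Mathlib

/-- A finset of vertices is independent: no edge inside. -/
def SimpleGraph.IsIndepFinset {V : Type*} (G : SimpleGraph V) (s : Finset V) : Prop :=
  ∀ v ∈ s, ∀ w ∈ s, ¬ G.Adj v w

/-- `indepCount G t` = number of independent sets of size `t` in `G`. -/
noncomputable def indepCount {V : Type*} [Fintype V] (G : SimpleGraph V) (t : ℕ) : ℕ :=
  Nat.card {s : Finset V // s.card = t ∧ G.IsIndepFinset s}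

/-- `indepTotal G` = total number of independent sets in `G` (including ∅). -/
noncomputable def indepTotal {V : Type*} [Fintype V] (G : SimpleGraph V) : ℕ :=
  Nat.card {s : Finset V // G.IsIndepFinset s}

open Classical in
/-- The independence polynomial `P(G,x) = Σ_t i_t(G) xᵗ`. -/
noncomputable def indPoly {V : Type*} [Fintype V] (G : SimpleGraph V) (x : ℝ) : ℝ :=
  ∑ s ∈ Finset.univ.filter (fun s : Finset V => G.IsIndepFinset s), x ^ s.card

namespace IndPolyAux

open Finset

/-- Bernoulli-based combination step for AM-GM. -/
lemma bern_combine (k : ℕ) (u v : ℝ) (hv : 0 ≤ v) (hvu : v ≤ u) :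
    (1 + u) * (1 + v) ^ k ≤ (1 + (u + k * v) / (k + 1)) ^ (k + 1) := by
  have hk1 : (0:ℝ) < (k:ℝ) + 1 := by positivity
  set m : ℝ := (u + k * v) / (k + 1) with hm
  have hvm : v ≤ m := by
    rw [hm, le_div_iff₀ hk1]; nlinarith
  have hmu : m ≤ u := by
    rw [hm, div_le_iff₀ hk1]; nlinarith
  have h1v : (0:ℝ) < 1 + v := by linarith
  have h1m : (0:ℝ) < 1 + m := by linarith
  have hkey : (k:ℝ) * (m - v) = u - m := by
    rw [hm]; field_simp; ring
  have hb : 1 + (k:ℝ) * ((m - v)/(1+v)) ≤ (1 + (m-v)/(1+v)) ^ k := by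
    apply one_add_mul_le_pow
    have : (0:ℝ) ≤ (m - v)/(1+v) := div_nonneg (by linarith) h1v.le
    linarith
  have hrw : (1 + (m-v)/(1+v)) = (1+m)/(1+v) := by field_simp; ring
  rw [hrw] at hb
  have hpow : ((1+m)/(1+v))^k = (1+m)^k / (1+v)^k := div_pow _ _ _
  rw [hpow] at hb
  have hvk : (0:ℝ) < (1+v)^k := by positivity
  have hb2 : (1 + (k:ℝ)*((m-v)/(1+v))) * (1+v)^k ≤ (1+m)^k := by
    calc (1 + (k:ℝ)*((m-v)/(1+v))) * (1+v)^k ≤ ((1+m)^k/(1+v)^k) * (1+v)^k :=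
          mul_le_mul_of_nonneg_right hb hvk.le
      _ = (1+m)^k := by field_simp
  have hb3 : (1+m) * ((1 + (k:ℝ)*((m-v)/(1+v))) * (1+v)^k) ≤ (1+m) * (1+m)^k :=
    mul_le_mul_of_nonneg_left hb2 h1m.le
  have hfinal : (1+u) * (1+v)^k ≤ (1+m) * ((1 + (k:ℝ)*((m-v)/(1+v))) * (1+v)^k) := by
    have h1 : (1+u) ≤ (1+m) * (1 + (k:ℝ)*((m-v)/(1+v))) := by
      have e1 : (1+m) * (1 + (k:ℝ)*((m-v)/(1+v))) = (1+m) + (k:ℝ)*(m-v) * ((1+m)/(1+v)) := by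
        field_simp
      have e2 : (1:ℝ) ≤ (1+m)/(1+v) := by
        rw [le_div_iff₀ h1v]; linarith
      have e3 : (0:ℝ) ≤ (k:ℝ)*(m-v) := by nlinarith
      nlinarith [mul_le_mul_of_nonneg_left e2 e3]
    calc (1+u) * (1+v)^k ≤ ((1+m) * (1 + (k:ℝ)*((m-v)/(1+v)))) * (1+v)^k :=
          mul_le_mul_of_nonneg_right h1 hvk.le
      _ = (1+m) * ((1 + (k:ℝ)*((m-v)/(1+v))) * (1+v)^k) := by ring
  calc (1+u)*(1+v)^k ≤ (1+m)*(1+m)^k := le_trans hfinal hb3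
    _ = (1+m)^(k+1) := (pow_succ' _ _).symm

/-- AM-GM style bound: product of at most `α` factors `1 + zᵢ`. -/
lemma prod_one_add_le {ι : Type*} [DecidableEq ι] (α : ℕ) :
    ∀ (s : Finset ι) (z : ι → ℝ), (∀ i ∈ s, 0 ≤ z i) → s.card ≤ α →
      ∏ i ∈ s, (1 + z i) ≤ (1 + (∑ i ∈ s, z i) / α) ^ α := by
  induction α with
  | zero =>
    intro s z _ hcard
    have hs : s = ∅ := card_eq_zero.mp (Nat.le_zero.mp hcard)
    subst hs; simp
  | succ α ih =>
    intro s z hz hcard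
    rcases s.eq_empty_or_nonempty with rfl | hne
    · simp
    obtain ⟨i, hi, hmax⟩ := s.exists_max_image z hne
    have hzi : 0 ≤ z i := hz i hi
    set S' : ℝ := ∑ j ∈ s.erase i, z j with hS'
    have hS'0 : 0 ≤ S' := sum_nonneg fun j hj => hz j (mem_of_mem_erase hj)
    have hcard' : (s.erase i).card ≤ α := by
      rw [card_erase_of_mem hi]; omega
    have hS'le : S' ≤ (α:ℝ) * z i := by
      calc S' ≤ (s.erase i).card • z i :=
            sum_le_card_nsmul _ _ _ (fun j hj => hmax j (mem_of_mem_erase hj))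
        _ = ((s.erase i).card : ℝ) * z i := nsmul_eq_mul _ _
        _ ≤ (α:ℝ) * z i := by
            apply mul_le_mul_of_nonneg_right _ hzi
            exact_mod_cast hcard'
    set v : ℝ := S' / α with hv
    have hv0 : 0 ≤ v := by positivity
    have hαv : (α:ℝ) * v = S' := by
      rcases Nat.eq_zero_or_pos α with h0 | hpos
      · have : s.erase i = ∅ := card_eq_zero.mp (by omega)
        simp [hv, hS', this, h0]
      · rw [hv]; field_simp
    have hvu : v ≤ z i := by
      rcases Nat.eq_zero_or_pos α with h0 | hpos
      · simp [hv, h0]; exact hzi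
      · rw [hv, div_le_iff₀ (by exact_mod_cast hpos : (0:ℝ) < (α:ℝ))]
        linarith [hS'le]
    have hIH : ∏ j ∈ s.erase i, (1 + z j) ≤ (1 + v) ^ α :=
      ih (s.erase i) z (fun j hj => hz j (mem_of_mem_erase hj)) hcard'
    have key := bern_combine α (z i) v hv0 hvu
    calc ∏ j ∈ s, (1 + z j) = (1 + z i) * ∏ j ∈ s.erase i, (1 + z j) :=
          (mul_prod_erase s _ hi).symm
      _ ≤ (1 + z i) * (1 + v) ^ α := by
          apply mul_le_mul_of_nonneg_left hIH (by linarith)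
      _ ≤ (1 + (z i + α * v) / (α + 1)) ^ (α + 1) := key
      _ = (1 + (∑ j ∈ s, z j) / (α + 1 : ℕ)) ^ (α + 1) := by
          rw [hαv, ← add_sum_erase s z hi]
          norm_num [hS']

open Classical in
/-- The finset of independent sets. -/
noncomputable def IndF {V : Type*} [Fintype V] (G : SimpleGraph V) : Finset (Finset V) :=
  Finset.univ.filter (fun s : Finset V => G.IsIndepFinset s)

/-- Weighted independence polynomial. -/
noncomputable def fI {V : Type*} [Fintype V] (G : SimpleGraph V) (z : V → ℝ) : ℝ :=
  ∑ s ∈ IndF G, ∏ v ∈ s, z v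

open Classical in
noncomputable def Bco {V : Type*} [Fintype V] (G : SimpleGraph V) (z : V → ℝ) (u : V) : ℝ :=
  ∑ s ∈ (IndF G).filter (fun s => u ∈ s), ∏ v ∈ s.erase u, z v

open Classical in
noncomputable def Aco {V : Type*} [Fintype V] (G : SimpleGraph V) (z : V → ℝ) (u w : V) : ℝ :=
  ∑ s ∈ (IndF G).filter (fun s => u ∉ s ∧ w ∉ s), ∏ v ∈ s, z v

lemma mem_IndF {V : Type*} [Fintype V] {G : SimpleGraph V} {s : Finset V} :
    s ∈ IndF G ↔ G.IsIndepFinset s := by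
  classical
  simp [IndF]

open Classical in
lemma decompose {V : Type*} [Fintype V] (G : SimpleGraph V) (z : V → ℝ) (u w : V)
    (hadj : G.Adj u w) :
    fI G z = Aco G z u w + z u * Bco G z u + z w * Bco G z w := by
  classical
  have h1 : fI G z = (∑ s ∈ (IndF G).filter (fun s => u ∈ s), ∏ v ∈ s, z v)
      + ∑ s ∈ (IndF G).filter (fun s => u ∉ s), ∏ v ∈ s, z v := by
    rw [fI]
    exact (sum_filter_add_sum_filter_not _ _ _).symm
  have h2 : ∑ s ∈ (IndF G).filter (fun s => u ∉ s), ∏ v ∈ s, z v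
      = (∑ s ∈ ((IndF G).filter (fun s => u ∉ s)).filter (fun s => w ∈ s), ∏ v ∈ s, z v)
      + ∑ s ∈ ((IndF G).filter (fun s => u ∉ s)).filter (fun s => w ∉ s), ∏ v ∈ s, z v := by
    exact (sum_filter_add_sum_filter_not _ _ _).symm
  have h3 : ∑ s ∈ (IndF G).filter (fun s => u ∈ s), ∏ v ∈ s, z v = z u * Bco G z u := by
    rw [Bco, mul_sum]
    apply sum_congr rfl
    intro s hs
    rw [mem_filter] at hs
    exact (mul_prod_erase s z hs.2).symm
  have h4 : ((IndF G).filter (fun s => u ∉ s)).filter (fun s => w ∈ s)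
      = (IndF G).filter (fun s => w ∈ s) := by
    rw [filter_filter]
    apply filter_congr
    intro s hs
    have hind : G.IsIndepFinset s := mem_IndF.mp hs
    constructor
    · rintro ⟨_, h⟩; exact h
    · intro hw
      refine ⟨fun hu => ?_, hw⟩
      exact hind u hu w hw hadj
  have h5 : ∑ s ∈ (IndF G).filter (fun s => w ∈ s), ∏ v ∈ s, z v = z w * Bco G z w := by
    rw [Bco, mul_sum]
    apply sum_congr rfl
    intro s hs
    rw [mem_filter] at hs
    exact (mul_prod_erase s z hs.2).symm
  have h6 : ((IndF G).filter (fun s => u ∉ s)).filter (fun s => w ∉ s)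
      = (IndF G).filter (fun s => u ∉ s ∧ w ∉ s) := by
    rw [filter_filter]
  rw [h1, h2, h3, h4, h5, h6, Aco]
  ring

lemma Aco_congr {V : Type*} [Fintype V] (G : SimpleGraph V) {z₁ z₂ : V → ℝ} (u w : V)
    (h : ∀ v, v ≠ u → v ≠ w → z₁ v = z₂ v) :
    Aco G z₁ u w = Aco G z₂ u w := by
  classical
  apply Finset.sum_congr rfl
  intro s hs
  rw [mem_filter] at hs
  apply Finset.prod_congr rfl
  intro v hv
  exact h v (fun e => hs.2.1 (e ▸ hv)) (fun e => hs.2.2 (e ▸ hv))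

lemma Bco_congr {V : Type*} [Fintype V] (G : SimpleGraph V) {z₁ z₂ : V → ℝ} (u w : V)
    (hadj : G.Adj u w) (h : ∀ v, v ≠ u → v ≠ w → z₁ v = z₂ v) :
    Bco G z₁ u = Bco G z₂ u := by
  classical
  apply Finset.sum_congr rfl
  intro s hs
  rw [mem_filter] at hs
  have hind := mem_IndF.mp hs.1
  have hwns : w ∉ s := fun hw => hind u hs.2 w hw hadj
  apply Finset.prod_congr rfl
  intro v hv
  have hvu : v ≠ u := (mem_erase.mp hv).1
  have hvw : v ≠ w := fun e => hwns (e ▸ mem_of_mem_erase hv)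
  exact h v hvu hvw

open Classical in
lemma smooth_step {V : Type*} [Fintype V] (G : SimpleGraph V) (z : V → ℝ)
    (hz : ∀ v, 0 ≤ z v) (u w : V) (hadj : G.Adj u w)
    (hBC : Bco G z u ≤ Bco G z w) :
    fI G z ≤ fI G (Function.update (Function.update z u 0) w (z u + z w)) := by
  classical
  have huw : u ≠ w := hadj.ne
  set z' : V → ℝ := Function.update (Function.update z u 0) w (z u + z w) with hz'
  have hcong : ∀ v, v ≠ u → v ≠ w → z v = z' v := by
    intro v hvu hvw
    rw [hz', Function.update_of_ne hvw, Function.update_of_ne hvu]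
  have hz'u : z' u = 0 := by
    rw [hz', Function.update_of_ne huw, Function.update_self]
  have hz'w : z' w = z u + z w := by
    rw [hz', Function.update_self]
  rw [decompose G z u w hadj, decompose G z' u w hadj,
    Aco_congr G u w hcong, Bco_congr G u w hadj hcong, Bco_congr G w u hadj.symm
      (fun v h1 h2 => hcong v h2 h1), hz'u, hz'w]
  have h1 : z u * Bco G z' u ≤ z u * Bco G z' w := by
    rw [← Bco_congr G u w hadj hcong, ← Bco_congr G w u hadj.symm (fun v h1 h2 => hcong v h2 h1)]
    exact mul_le_mul_of_nonneg_left hBC (hz u)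
  nlinarith [h1]

open Classical in
lemma indep_supp_case {V : Type*} [Fintype V] (G : SimpleGraph V) (α : ℕ)
    (hub : ∀ s : Finset V, G.IsIndepFinset s → s.card ≤ α)
    (z : V → ℝ) (hz : ∀ v, 0 ≤ z v)
    (hind : G.IsIndepFinset (Finset.univ.filter (fun v => z v ≠ 0))) :
    fI G z ≤ (1 + (∑ v, z v) / α) ^ α := by
  classical
  set supp := Finset.univ.filter (fun v => z v ≠ 0) with hsupp
  have h1 : fI G z = ∑ s ∈ (IndF G).filter (fun s => s ⊆ supp), ∏ v ∈ s, z v := by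
    rw [fI]
    rw [sum_filter_of_ne]
    intro s _ hne
    intro v hv
    rw [hsupp, mem_filter]
    refine ⟨mem_univ v, fun h0 => hne ?_⟩
    exact prod_eq_zero hv h0
  have h2 : (IndF G).filter (fun s => s ⊆ supp) = supp.powerset := by
    ext s
    rw [mem_filter, mem_powerset, mem_IndF]
    constructor
    · rintro ⟨_, h⟩; exact h
    · intro hsub
      refine ⟨fun v hv w hw => hind v (hsub hv) w (hsub hw), hsub⟩
  have h3 : ∑ s ∈ supp.powerset, ∏ v ∈ s, z v = ∏ v ∈ supp, (1 + z v) := by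
    have : ∏ v ∈ supp, (1 + z v) = ∏ v ∈ supp, (z v + 1) := by
      apply prod_congr rfl; intro v _; ring
    rw [this, prod_add z (fun _ => (1:ℝ)) supp]
    apply sum_congr rfl
    intro t _
    simp
  have h4 : ∑ v ∈ supp, z v = ∑ v, z v := by
    rw [hsupp]; exact sum_filter_ne_zero _
  rw [h1, h2, h3, ← h4]
  exact prod_one_add_le α supp z (fun i _ => hz i) (hub supp hind)

open Classical in
lemma update_facts {V : Type*} [Fintype V] (z : V → ℝ) (hz : ∀ v, 0 ≤ z v) (u w : V)
    (huw : u ≠ w) (hzu : z u ≠ 0) (hzw : z w ≠ 0) :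
    (∀ v, 0 ≤ Function.update (Function.update z u 0) w (z u + z w) v) ∧
    (∑ v, Function.update (Function.update z u 0) w (z u + z w) v = ∑ v, z v) ∧
    (Finset.univ.filter
        (fun v => Function.update (Function.update z u 0) w (z u + z w) v ≠ 0))
      ⊆ (Finset.univ.filter (fun v => z v ≠ 0)).erase u := by
  classical
  set z' : V → ℝ := Function.update (Function.update z u 0) w (z u + z w) with hz'
  have hz'u : z' u = 0 := by
    rw [hz', Function.update_of_ne huw, Function.update_self]
  have hz'w : z' w = z u + z w := by
    rw [hz', Function.update_self]
  have hother : ∀ v, v ≠ u → v ≠ w → z' v = z v := by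
    intro v hvu hvw
    rw [hz', Function.update_of_ne hvw, Function.update_of_ne hvu]
  refine ⟨?_, ?_, ?_⟩
  · intro v
    by_cases h1 : v = u
    · subst h1; rw [hz'u]
    by_cases h2 : v = w
    · rw [h2, hz'w]; have := hz u; have := hz w; linarith
    · rw [hother v h1 h2]; exact hz v
  · have hu' : u ∈ Finset.univ \ ({w} : Finset V) := by
      simp [huw]
    have e1 : ∑ v, z' v = (z u + z w) + ∑ v ∈ Finset.univ \ {w}, Function.update z u 0 v := by
      rw [hz']
      exact Finset.sum_update_of_mem (mem_univ w) _ _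
    have e2 : ∑ v ∈ Finset.univ \ {w}, Function.update z u 0 v
        = 0 + ∑ v ∈ (Finset.univ \ {w}) \ {u}, z v := Finset.sum_update_of_mem hu' _ _
    have e3 : ∑ v, z v = ∑ v ∈ Finset.univ \ {w}, z v + z w :=
      Finset.sum_eq_sum_sdiff_singleton_add (mem_univ w) z
    have e4 : ∑ v ∈ Finset.univ \ {w}, z v = ∑ v ∈ (Finset.univ \ {w}) \ {u}, z v + z u :=
      Finset.sum_eq_sum_sdiff_singleton_add hu' z
    rw [e1, e2, e3, e4]; ring
  · intro v hv
    rw [mem_filter] at hv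
    rw [mem_erase, mem_filter]
    by_cases h1 : v = u
    · exfalso; exact hv.2 (h1 ▸ hz'u)
    by_cases h2 : v = w
    · subst h2; exact ⟨h1, mem_univ v, hzw⟩
    · refine ⟨h1, mem_univ v, fun h0 => hv.2 ?_⟩
      rw [hother v h1 h2, h0]

open Classical in
lemma weight_bound {V : Type*} [Fintype V] (G : SimpleGraph V) (α : ℕ)
    (hub : ∀ s : Finset V, G.IsIndepFinset s → s.card ≤ α) :
    ∀ (k : ℕ) (z : V → ℝ), (∀ v, 0 ≤ z v) →
      (Finset.univ.filter (fun v => z v ≠ 0)).card ≤ k →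
      fI G z ≤ (1 + (∑ v, z v) / α) ^ α := by
  intro k
  induction k with
  | zero =>
    intro z hz hcard
    apply indep_supp_case G α hub z hz
    have h0 : (Finset.univ.filter (fun v => z v ≠ 0)) = ∅ :=
      card_eq_zero.mp (Nat.le_zero.mp hcard)
    rw [h0]
    intro v hv
    exact absurd hv (notMem_empty v)
  | succ k ih =>
    intro z hz hcard
    by_cases hind : G.IsIndepFinset (Finset.univ.filter (fun v => z v ≠ 0))
    · exact indep_supp_case G α hub z hz hind
    · rw [SimpleGraph.IsIndepFinset] at hind
      push_neg at hind
      obtain ⟨u, hu, w, hw, hadj⟩ := hind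
      have huw : u ≠ w := hadj.ne
      have hzu : z u ≠ 0 := (mem_filter.mp hu).2
      have hzw : z w ≠ 0 := (mem_filter.mp hw).2
      rcases le_total (Bco G z u) (Bco G z w) with hbc | hbc
      · obtain ⟨hpos, hsum, hsub⟩ := update_facts z hz u w huw hzu hzw
        have hstep := smooth_step G z hz u w hadj hbc
        have hcard' :
            (Finset.univ.filter
              (fun v => Function.update (Function.update z u 0) w (z u + z w) v ≠ 0)).card ≤ k := by
          have := Finset.card_le_card hsub
          rw [card_erase_of_mem hu] at this
          omega
        have := ih _ hpos hcard'
        rw [hsum] at this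
        exact le_trans hstep this
      · obtain ⟨hpos, hsum, hsub⟩ := update_facts z hz w u huw.symm hzw hzu
        have hstep := smooth_step G z hz w u hadj.symm hbc
        have hcard' :
            (Finset.univ.filter
              (fun v => Function.update (Function.update z w 0) u (z w + z u) v ≠ 0)).card ≤ k := by
          have := Finset.card_le_card hsub
          rw [card_erase_of_mem hw] at this
          omega
        have := ih _ hpos hcard'
        rw [hsum] at this
        exact le_trans hstep this

end IndPolyAux

theorem indPoly_le_of_indepNum {V : Type*} [Fintype V] (G : SimpleGraph V) (n α : ℕ)
    (hcard : Fintype.card V = n) (hα1 : 1 ≤ α)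
    (hα : IsGreatest {k : ℕ | ∃ s : Finset V, s.card = k ∧ G.IsIndepFinset s} α)
    (x : ℝ) (hx : 0 < x) :
    indPoly G x ≤ (1 + n * x / α) ^ α := by
  classical
  have hub : ∀ s : Finset V, G.IsIndepFinset s → s.card ≤ α := fun s hs => hα.2 ⟨s, rfl, hs⟩
  have hb := IndPolyAux.weight_bound G α hub
    (Finset.univ.filter (fun v : V => (fun _ : V => x) v ≠ 0)).card
    (fun _ : V => x) (fun _ => hx.le) le_rfl
  have he : indPoly G x = IndPolyAux.fI G (fun _ : V => x) := by
    rw [indPoly, IndPolyAux.fI, IndPolyAux.IndF]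
    apply Finset.sum_congr rfl
    intro s _
    rw [Finset.prod_const]
  have hs : (∑ _v : V, x) = (n : ℝ) * x := by
    rw [Finset.sum_const, Finset.card_univ, hcard, nsmul_eq_mul]
  rw [he]
  rw [hs] at hb
  exact hb
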